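/- Let λ > 1 be a real number, let R be a positive integer with λ < 2^R, let Ω ≥ 0, and set Δ = Ω / (1 - λ·2^{-R}). Then there exists a function g : ℝ → ℝ whose range contains at most 2^R distinct values, such that for every disturbance sequence w : ℕ → ℝ with |w_t| ≤ Ω/2 for all t, the closed-loop trajectory defined by x_0 = 0 and x_{t+1} = λ·x_t + g(x_t) + w_t satisfies |x_t| ≤ Δ/2 for all t ∈ ℕ. -/

import Mathlib

/-- Quantization error bound: the nearest-center quantizer on `[-D/2, D/2]` with `N`
bins has error at most half a bin width. -/
lemma quant_err (N : ℕ) (hN : 0 < N) (D : ℝ) (hD : 0 ≤ D) (x : ℝ) (hx : |x| ≤ D / 2) :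
    |x - (-(D/2) + (D/N) * ((min (N-1) (⌊(x + D/2)/(D/N)⌋.toNat) : ℕ) + 1/2))| ≤ (D/N)/2 := by
  rcases eq_or_lt_of_le hD with h0 | hDpos
  · have hx0 : x = 0 := by
      rw [← h0] at hx
      have := abs_nonneg x
      have hx' : |x| = 0 := le_antisymm (by linarith) this
      exact abs_eq_zero.mp hx'
    simp [← h0, hx0]
  · have hNpos : (0:ℝ) < N := by exact_mod_cast hN
    set δ := D / N with hδ
    have hδpos : 0 < δ := div_pos hDpos hNpos
    have hND : (N : ℝ) * δ = D := by rw [hδ]; field_simp [hNpos.ne']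
    obtain ⟨hx1, hx2⟩ := abs_le.mp hx
    have hy0 : 0 ≤ x + D/2 := by linarith
    have hyD : x + D/2 ≤ D := by linarith
    set m := ⌊(x + D/2) / δ⌋ with hm
    have hm0 : 0 ≤ m := Int.floor_nonneg.mpr (by positivity)
    have hmt : (m.toNat : ℤ) = m := Int.toNat_of_nonneg hm0
    have hfl : (m : ℝ) ≤ (x + D/2) / δ := Int.floor_le _
    have hfl2 : (x + D/2) / δ < m + 1 := Int.lt_floor_add_one _
    have hle : (m : ℝ) * δ ≤ x + D/2 := (le_div_iff₀ hδpos).mp hfl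
    have hltu : x + D/2 < ((m : ℝ) + 1) * δ := by
      have := (div_lt_iff₀ hδpos).mp hfl2
      nlinarith
    by_cases hc : m.toNat ≤ N - 1
    · rw [min_eq_right hc]
      have hcast : ((m.toNat : ℕ) : ℝ) = (m : ℝ) := by exact_mod_cast hmt
      rw [hcast, abs_le]
      constructor <;> nlinarith
    · push_neg at hc
      rw [min_eq_left hc.le]
      have hNm : (N : ℤ) ≤ m := by omega
      have hNmR : (N : ℝ) ≤ (m : ℝ) := by exact_mod_cast hNm
      have hyD' : D ≤ x + D/2 := by nlinarith
      have hyeq : x + D/2 = D := le_antisymm hyD hyD'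
      have hcast : ((N - 1 : ℕ) : ℝ) = (N : ℝ) - 1 := by
        have h1 : 1 ≤ N := hN
        push_cast [Nat.cast_sub h1]
        ring
      rw [hcast, abs_le]
      constructor <;> nlinarith

/-- Virtual controlled process over a noiseless rate-`R` channel: with `1 < λ < 2^R`
there is a state-feedback control law `g` taking at most `2^R` values that keeps the
state of `x_{t+1} = λ x_t + g(x_t) + w_t` inside `[-Δ/2, Δ/2]`, `Δ = Ω/(1-λ 2^{-R})`,
for every disturbance sequence bounded by `Ω/2`. -/
theorem virtual_controlled_process (lam : ℝ) (hlam : 1 < lam) (R : ℕ) (hR : 0 < R)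
    (hlt : lam < 2 ^ R) (Ω : ℝ) (hΩ : 0 ≤ Ω) :
    ∃ g : ℝ → ℝ, (∃ s : Finset ℝ, s.card ≤ 2 ^ R ∧ ∀ x, g x ∈ s) ∧
      ∀ w : ℕ → ℝ, (∀ t, |w t| ≤ Ω / 2) →
        ∀ x : ℕ → ℝ, x 0 = 0 → (∀ t, x (t + 1) = lam * x t + g (x t) + w t) →
          ∀ t, |x t| ≤ (Ω / (1 - lam * 2 ^ (-(R : ℤ)))) / 2 := by
  have hzpow : (2 : ℝ) ^ (-(R : ℤ)) = ((2:ℝ) ^ R)⁻¹ := by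
    rw [zpow_neg, zpow_natCast]
  set N : ℕ := 2 ^ R with hN
  have hNpos : 0 < N := Nat.pow_pos (by norm_num)
  have hNR : ((N : ℝ)) = (2:ℝ) ^ R := by push_cast [hN]; ring
  have h2R : (0:ℝ) < (2:ℝ) ^ R := by positivity
  have hden : (0:ℝ) < 1 - lam * ((2:ℝ)^R)⁻¹ := by
    have : lam * ((2:ℝ)^R)⁻¹ < 1 := by
      rw [mul_inv_lt_iff₀ h2R]; linarith
    linarith
  set D : ℝ := Ω / (1 - lam * ((2:ℝ)^R)⁻¹) with hD
  have hDeq : (Ω / (1 - lam * 2 ^ (-(R : ℤ)))) = D := by rw [hzpow]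
  have hD0 : 0 ≤ D := div_nonneg hΩ hden.le
  have hDrec : D = lam * (D / N) + Ω := by
    have h1 : D * (1 - lam * ((2:ℝ)^R)⁻¹) = Ω := div_mul_cancel₀ _ hden.ne'
    rw [hNR]
    linear_combination h1
  set Q : ℝ → ℝ := fun x => -(D/2) + (D/N) * ((min (N-1) (⌊(x + D/2)/(D/N)⌋.toNat) : ℕ) + 1/2)
    with hQ
  refine ⟨fun x => -lam * Q x, ⟨(Finset.range N).image (fun k : ℕ => -lam * (-(D/2) + (D/N) * ((k:ℝ) + 1/2))), ?_, ?_⟩, ?_⟩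
  · calc ((Finset.range N).image _).card ≤ (Finset.range N).card := Finset.card_image_le
      _ = N := Finset.card_range N
      _ ≤ 2 ^ R := le_of_eq hN.symm
  · intro x
    refine Finset.mem_image.mpr ⟨min (N-1) (⌊(x + D/2)/(D/N)⌋.toNat), ?_, rfl⟩
    exact Finset.mem_range.mpr (lt_of_le_of_lt (min_le_left _ _) (Nat.sub_lt hNpos one_pos))
  · intro w hw x hx0 hstep t
    rw [hDeq]
    induction t with
    | zero => rw [hx0]; simpa using div_nonneg hD0 (by norm_num : (0:ℝ) ≤ 2)
    | succ t ih =>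
      have herr : |x t - Q (x t)| ≤ (D/N)/2 := quant_err N hNpos D hD0 (x t) ih
      have hxt : x (t+1) = lam * (x t - Q (x t)) + w t := by
        rw [hstep t]; ring
      rw [hxt]
      calc |lam * (x t - Q (x t)) + w t| ≤ |lam * (x t - Q (x t))| + |w t| := abs_add_le _ _
        _ = lam * |x t - Q (x t)| + |w t| := by
            rw [abs_mul, abs_of_pos (by linarith : (0:ℝ) < lam)]
        _ ≤ lam * ((D/N)/2) + Ω/2 := by
            have := hw t
            have hl : lam * |x t - Q (x t)| ≤ lam * ((D/N)/2) :=
              mul_le_mul_of_nonneg_left herr (by linarith)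
            linarith
        _ = D / 2 := by
            conv_rhs => rw [hDrec]
            ring
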